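/- For every real number x with 0 < x < 1, ζ(2)/ln(x) < ∑_{n=1}^∞ ln(1 - x^n), i.e., the sum of the series ∑_{n=1}^∞ ln(1 - x^n) is strictly greater than (π²/6)/ln(x); note ln(x) < 0, so the left-hand side is negative. -/

import Mathlib

set_option maxHeartbeats 1000000

open Real Finset

/-- For `0 < x < 1`, `ζ(2)/ln(x) < ∑_{n=1}^∞ ln(1 - x^n)`, where `ζ(2) = π²/6`. -/
theorem zeta_two_div_log_lt_log_series (x : ℝ) (hx0 : 0 < x) (hx1 : x < 1) :
    (Real.pi ^ 2 / 6) / Real.log x < ∑' n : ℕ, Real.log (1 - x ^ (n + 1)) := by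
  have hx1' : 0 < 1 - x := by linarith
  have hpow : ∀ m : ℕ, x ^ (m + 1) < 1 := fun m => pow_lt_one₀ hx0.le hx1 m.succ_ne_zero
  have hpowpos : ∀ m : ℕ, 0 < x ^ (m + 1) := fun m => pow_pos hx0 _
  have hfnn : ∀ p : ℕ × ℕ, 0 ≤ (x ^ (p.1 + 1)) ^ (p.2 + 1) / ((p.2 : ℝ) + 1) := fun p =>
    div_nonneg (pow_nonneg (hpowpos p.1).le _) (by positivity)
  -- row sums
  have hrow : ∀ n : ℕ, HasSum (fun k : ℕ => (x ^ (n + 1)) ^ (k + 1) / ((k : ℝ) + 1))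
      (-Real.log (1 - x ^ (n + 1))) := fun n =>
    hasSum_pow_div_log_of_abs_lt_one (by rw [abs_of_pos (hpowpos n)]; exact hpow n)
  -- the row-sum sequence is summable
  have hlogle : ∀ n : ℕ, -Real.log (1 - x ^ (n + 1)) ≤ x ^ (n + 1) / (1 - x) := by
    intro n
    have h1 : 0 < 1 - x ^ (n + 1) := by linarith [hpow n]
    have h2 : Real.log (1 - x ^ (n + 1))⁻¹ ≤ (1 - x ^ (n + 1))⁻¹ - 1 :=
      Real.log_le_sub_one_of_pos (inv_pos.2 h1)
    rw [Real.log_inv] at h2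
    have h3 : (1 - x ^ (n + 1))⁻¹ - 1 = x ^ (n + 1) / (1 - x ^ (n + 1)) := by
      field_simp
      ring
    rw [h3] at h2
    refine h2.trans ?_
    have hxx : x ^ (n + 1) ≤ x := by
      calc x ^ (n + 1) ≤ x ^ 1 := pow_le_pow_of_le_one hx0.le hx1.le (by omega)
      _ = x := pow_one x
    exact div_le_div_of_nonneg_left (hpowpos n).le hx1' (by linarith)
  have hsumgeo : Summable fun n : ℕ => x ^ (n + 1) / (1 - x) := by
    have h := (summable_geometric_of_lt_one hx0.le hx1).mul_left (x / (1 - x))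
    refine h.congr fun n => ?_
    rw [pow_succ']
    ring
  have hsumrow : Summable fun n : ℕ => -Real.log (1 - x ^ (n + 1)) := by
    refine Summable.of_nonneg_of_le (fun n => ?_) hlogle hsumgeo
    have h1 : 0 < 1 - x ^ (n + 1) := by linarith [hpow n]
    have := Real.log_nonpos (x := 1 - x ^ (n + 1)) (by linarith) (by linarith [hpowpos n])
    linarith
  -- summability of the double series
  have hsf : Summable (fun p : ℕ × ℕ => (x ^ (p.1 + 1)) ^ (p.2 + 1) / ((p.2 : ℝ) + 1)) := by
    rw [summable_prod_of_nonneg hfnn]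
    refine ⟨fun n => (hrow n).summable, ?_⟩
    refine hsumrow.congr fun n => ?_
    exact ((hrow n).tsum_eq).symm
  have hTsum : HasSum (fun n : ℕ => -Real.log (1 - x ^ (n + 1)))
      (∑' p : ℕ × ℕ, (x ^ (p.1 + 1)) ^ (p.2 + 1) / ((p.2 : ℝ) + 1)) :=
    hsf.hasSum.prod_fiberwise hrow
  -- column sums
  have hcol : ∀ k : ℕ, HasSum (fun n : ℕ => (x ^ (n + 1)) ^ (k + 1) / ((k : ℝ) + 1))
      (x ^ (k + 1) / (1 - x ^ (k + 1)) / ((k : ℝ) + 1)) := by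
    intro k
    have h2 : HasSum (fun n : ℕ => (x ^ (k + 1)) ^ n) (1 - x ^ (k + 1))⁻¹ :=
      hasSum_geometric_of_lt_one (hpowpos k).le (hpow k)
    have h3 := (h2.mul_left (x ^ (k + 1))).div_const ((k : ℝ) + 1)
    convert h3 using 2 with n
    · rfl
    rw [← pow_succ', ← pow_mul, ← pow_mul, Nat.mul_comm]
    exact div_eq_mul_inv _ _
  have hTcol : HasSum (fun k : ℕ => x ^ (k + 1) / (1 - x ^ (k + 1)) / ((k : ℝ) + 1))
      (∑' p : ℕ × ℕ, (x ^ (p.1 + 1)) ^ (p.2 + 1) / ((p.2 : ℝ) + 1)) :=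
    HasSum.prod_fiberwise ((Equiv.prodComm ℕ ℕ).hasSum_iff.2 hsf.hasSum) hcol
  -- bound the column sums
  have hgle : ∀ k : ℕ, x ^ (k + 1) / (1 - x ^ (k + 1)) / ((k : ℝ) + 1)
      ≤ x / ((1 - x) * ((k : ℝ) + 1) ^ 2) := by
    intro k
    have h1k : (0 : ℝ) < (k : ℝ) + 1 := by positivity
    have hden : 0 < 1 - x ^ (k + 1) := by linarith [hpow k]
    have hS : ((k : ℝ) + 1) * x ^ k ≤ ∑ i ∈ range (k + 1), x ^ i := by
      have := Finset.card_nsmul_le_sum (range (k + 1)) (fun i => x ^ i) (x ^ k)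
        (fun i hi => pow_le_pow_of_le_one hx0.le hx1.le (Nat.lt_succ_iff.mp (mem_range.mp hi)))
      simpa [card_range, nsmul_eq_mul] using this
    have hgeom : (∑ i ∈ range (k + 1), x ^ i) * (1 - x) = 1 - x ^ (k + 1) := by
      have h := geom_sum_mul x (k + 1)
      linear_combination -h
    have key : ((k : ℝ) + 1) * x ^ k * (1 - x) ≤ 1 - x ^ (k + 1) := by
      calc ((k : ℝ) + 1) * x ^ k * (1 - x)
          ≤ (∑ i ∈ range (k + 1), x ^ i) * (1 - x) :=
            mul_le_mul_of_nonneg_right hS hx1'.le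
        _ = 1 - x ^ (k + 1) := hgeom
    have key2 := mul_le_mul_of_nonneg_left key
      (by positivity : (0 : ℝ) ≤ x * ((k : ℝ) + 1))
    rw [div_div, div_le_div_iff₀ (by positivity) (by positivity)]
    have hps : x ^ (k + 1) = x ^ k * x := pow_succ x k
    have heq : x ^ (k + 1) * ((1 - x) * ((k : ℝ) + 1) ^ 2)
        = x * ((k : ℝ) + 1) * (((k : ℝ) + 1) * x ^ k * (1 - x)) := by rw [hps]; ring
    rw [heq]
    exact key2.trans (le_of_eq (by ring))
  -- the Basel sum
  have hbasel : HasSum (fun k : ℕ => 1 / ((k : ℝ) + 1) ^ 2) (π ^ 2 / 6) := by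
    have h := (hasSum_nat_add_iff' 1).mpr hasSum_zeta_two
    push_cast at h
    simpa using h
  have hb : HasSum (fun k : ℕ => x / ((1 - x) * ((k : ℝ) + 1) ^ 2))
      (x / (1 - x) * (π ^ 2 / 6)) := by
    have hfe : (fun k : ℕ => x / ((1 - x) * ((k : ℝ) + 1) ^ 2))
        = fun k : ℕ => x / (1 - x) * (1 / ((k : ℝ) + 1) ^ 2) := by
      funext k
      rw [div_mul_div_comm, mul_one]
    rw [hfe]
    exact hbasel.mul_left _
  have hTle : (∑' p : ℕ × ℕ, (x ^ (p.1 + 1)) ^ (p.2 + 1) / ((p.2 : ℝ) + 1))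
      ≤ x / (1 - x) * (π ^ 2 / 6) := hasSum_le hgle hTcol hb
  -- final comparison
  have hc : (0 : ℝ) < π ^ 2 / 6 := by positivity
  have hlog : Real.log x < 0 := Real.log_neg hx0 hx1
  have hL : 0 < -Real.log x := by linarith
  have hkey : x * (-Real.log x) < 1 - x := by
    have h := Real.log_lt_sub_one_of_pos (x := x⁻¹) (by positivity)
      (by simp only [ne_eq, inv_eq_one]; exact ne_of_lt hx1)
    rw [Real.log_inv] at h
    have h2 := mul_lt_mul_of_pos_left h hx0
    rw [mul_sub, mul_inv_cancel₀ hx0.ne'] at h2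
    linarith
  have h4 : x / (1 - x) < 1 / (-Real.log x) := (div_lt_div_iff₀ hx1' hL).2 (by linarith)
  have hfin : x / (1 - x) * (π ^ 2 / 6) < (π ^ 2 / 6) / (-Real.log x) := by
    have := mul_lt_mul_of_pos_right h4 hc
    rw [one_div, inv_mul_eq_div] at this
    exact this
  have hTlt : (∑' p : ℕ × ℕ, (x ^ (p.1 + 1)) ^ (p.2 + 1) / ((p.2 : ℝ) + 1))
      < (π ^ 2 / 6) / (-Real.log x) := lt_of_le_of_lt hTle hfin
  have hts : ∑' n : ℕ, Real.log (1 - x ^ (n + 1))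
      = -(∑' p : ℕ × ℕ, (x ^ (p.1 + 1)) ^ (p.2 + 1) / ((p.2 : ℝ) + 1)) := by
    have h := hTsum.neg
    simp only [neg_neg] at h
    exact h.tsum_eq
  rw [hts]
  have h5 : (π ^ 2 / 6) / Real.log x = -((π ^ 2 / 6) / (-Real.log x)) := by
    rw [div_neg, neg_neg]
  rw [h5]
  linarith
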